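/- Let (X, 𝒜, μ) be σ-finite, T : X → X a measurable map with μ(T(A)) ≤ μ(A) for every measurable A with measurable image, and suppose T is non-singular. Let X_k = {x : h_{Tᵏ}(x) = 0}. If almost every point of X_kᶜ = X \ X_k lies in T^{k+1}(X_kᶜ) (i.e. μ(X_kᶜ \ T^{k+1}(X_kᶜ)) = 0), then μ_k ≪ μ_{k+1}; hence the measures μ_k and μ_{k+1} are equivalent. -/

import Mathlib

open MeasureTheory

lemma preimage_iter_null {X : Type*} [MeasurableSpace X] (μ : Measure X)
    (T : X → X) (hT : Measurable T)
    (hns : ∀ A : Set X, MeasurableSet A → μ A = 0 → μ (T ⁻¹' A) = 0)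
    (n : ℕ) (A : Set X) (hA : MeasurableSet A) (h0 : μ A = 0) :
    μ (T^[n] ⁻¹' A) = 0 := by
  induction n with
  | zero => simpa using h0
  | succ n ih =>
    rw [Function.iterate_succ, Set.preimage_comp]
    exact hns _ ((hT.iterate n) hA) ih

lemma map_iter_ac {X : Type*} [MeasurableSpace X] (μ : Measure X)
    (T : X → X) (hT : Measurable T)
    (hns : ∀ A : Set X, MeasurableSet A → μ A = 0 → μ (T ⁻¹' A) = 0)
    (n : ℕ) : μ.map (T^[n]) ≪ μ := by
  refine Measure.AbsolutelyContinuous.mk fun A hA h0 => ?_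
  rw [Measure.map_apply (hT.iterate n) hA]
  exact preimage_iter_null μ T hT hns n A hA h0

lemma image_null {X : Type*} [MeasurableSpace X] (μ : Measure X)
    (T : X → X)
    (himg : ∀ A : Set X, MeasurableSet A → μ (T '' A) ≤ μ A)
    (S : Set X) (h0 : μ S = 0) : μ (T '' S) = 0 := by
  have h1 : μ (T '' S) ≤ μ (T '' toMeasurable μ S) :=
    measure_mono (Set.image_mono (subset_toMeasurable μ S))
  have h2 := himg (toMeasurable μ S) (measurableSet_toMeasurable μ S)
  rw [measure_toMeasurable, h0] at h2
  exact le_antisymm (h1.trans h2) bot_le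

lemma image_iter_null {X : Type*} [MeasurableSpace X] (μ : Measure X)
    (T : X → X)
    (himg : ∀ A : Set X, MeasurableSet A → μ (T '' A) ≤ μ A)
    (n : ℕ) (S : Set X) (h0 : μ S = 0) : μ (T^[n] '' S) = 0 := by
  induction n with
  | zero => simpa using h0
  | succ n ih =>
    rw [Function.iterate_succ', Set.image_comp]
    exact image_null μ T himg _ ih

/-- If `μ(T(A)) ≤ μ(A)` for measurable `A`, `T` is non-singular, and almost every point of
`X_kᶜ` lies in `T^{k+1}(X_kᶜ)`, where `X_k = {h_{Tᵏ} = 0}`, then `μ_k ≪ μ_{k+1}`, hence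
the measures `μ_k` and `μ_{k+1}` are equivalent. -/
theorem measures_equiv_of_image_cond {X : Type*} [MeasurableSpace X] (μ : Measure X)
    [SigmaFinite μ] (T : X → X) (hT : Measurable T)
    (himg : ∀ A : Set X, MeasurableSet A → μ (T '' A) ≤ μ A)
    (hns : ∀ A : Set X, MeasurableSet A → μ A = 0 → μ (T ⁻¹' A) = 0)
    (k : ℕ)
    (hXk : μ ({x | (μ.map (T^[k])).rnDeriv μ x = 0}ᶜ \
      T^[k + 1] '' ({x | (μ.map (T^[k])).rnDeriv μ x = 0}ᶜ)) = 0) :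
    μ.map (T^[k]) ≪ μ.map (T^[k + 1]) ∧ μ.map (T^[k + 1]) ≪ μ.map (T^[k]) := by
  set h : X → ENNReal := (μ.map (T^[k])).rnDeriv μ with hh
  set Xk : Set X := {x | h x = 0} with hXkdef
  have hac : μ.map (T^[k]) ≪ μ := map_iter_ac μ T hT hns k
  have hmeas_h : Measurable h := Measure.measurable_rnDeriv _ _
  have hXkm : MeasurableSet Xk := hmeas_h (measurableSet_singleton 0)
  constructor
  · -- μ_k ≪ μ_{k+1}
    refine Measure.AbsolutelyContinuous.mk fun A hA h0 => ?_
    rw [Measure.map_apply (hT.iterate (k + 1)) hA] at h0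
    set C : Set X := T^[k + 1] ⁻¹' A with hC
    -- μ(T^[k+1] '' C) = 0
    have himgC : μ (T^[k + 1] '' C) = 0 := image_iter_null μ T himg (k + 1) C h0
    -- μ_k Xk = 0
    have hXk0 : μ.map (T^[k]) Xk = 0 := by
      have := Measure.withDensity_rnDeriv_eq _ _ hac
      rw [← this, withDensity_apply _ hXkm]
      rw [setLIntegral_congr_fun hXkm
        (fun x hx => hx)]
      simp
    -- decompose
    have hsub : A ⊆ Xk ∪ (Xkᶜ \ T^[k + 1] '' Xkᶜ) ∪ T^[k + 1] '' C := by
      intro x hx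
      by_cases hxk : x ∈ Xk
      · exact Or.inl (Or.inl hxk)
      · by_cases him : x ∈ T^[k + 1] '' Xkᶜ
        · rcases him with ⟨y, hy, rfl⟩
          exact Or.inr ⟨y, hx, rfl⟩
        · exact Or.inl (Or.inr ⟨hxk, him⟩)
    have : μ.map (T^[k]) A ≤ 0 :=
      calc μ.map (T^[k]) A ≤ μ.map (T^[k]) (Xk ∪ (Xkᶜ \ T^[k + 1] '' Xkᶜ) ∪ T^[k + 1] '' C) :=
          measure_mono hsub
      _ ≤ μ.map (T^[k]) Xk + μ.map (T^[k]) (Xkᶜ \ T^[k + 1] '' Xkᶜ)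
          + μ.map (T^[k]) (T^[k + 1] '' C) :=
          le_trans (measure_union_le _ _) (add_le_add_left (measure_union_le _ _) _)
      _ = 0 := by rw [hXk0, hac hXk, hac himgC]; simp
    exact le_antisymm this bot_le
  · -- μ_{k+1} ≪ μ_k
    refine Measure.AbsolutelyContinuous.mk fun A hA h0 => ?_
    rw [Measure.map_apply (hT.iterate k) hA] at h0
    rw [Measure.map_apply (hT.iterate (k + 1)) hA, Function.iterate_succ, Set.preimage_comp]
    exact hns _ ((hT.iterate k) hA) h0
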